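/- For 1 ≤ i ≤ D-1, the 2×2 matrix X(i) = τ/(q^D-1) · [[q^{N+1} - q^i + q^D - q^{N+1-i}, (q^i-1)(q^{D-i}-1)(q^{N-i+1}-1)(q^{i-1} - q^{N-D})/(q-1)], [q^{D+1}(1-q), q^{N+D+1-i} + q^{D+i} - q^{N+1} - q^D]] has eigenvalues τ q^i and τ^{-1} q^{-i}, where τ = -q^{(-N-1)/2}. Equivalently, trace(X(i)) = τ q^i + τ^{-1} q^{-i} and det(X(i)) = 1. -/

import Mathlib

open Matrix

/-- The matrix `X(i)` has eigenvalues `τq^i` and `τ⁻¹q^{-i}`; equivalently its trace is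
`τq^i + τ⁻¹q^{-i}` and its determinant is `1`. -/
theorem X_matrix_trace_det (q : ℝ) (hq : 1 < q) (N D : ℕ)
    (hD : 3 ≤ D) (hND : 2 * D ≤ N)
    (i : ℕ) (hi1 : 1 ≤ i) (hi2 : i ≤ D - 1)
    (τ : ℝ) (hτ : τ = -q ^ ((-(N : ℝ) - 1) / 2))
    (X : Matrix (Fin 2) (Fin 2) ℝ)
    (hX : X = (τ / (q ^ D - 1)) •
      !![q ^ (N + 1) - q ^ i + q ^ D - q ^ (N + 1 - i),
         (q ^ i - 1) * (q ^ (D - i) - 1) * (q ^ (N - i + 1) - 1)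
           * (q ^ (i - 1) - q ^ (N - D)) / (q - 1);
         q ^ (D + 1) * (1 - q),
         q ^ (N + D + 1 - i) + q ^ (D + i) - q ^ (N + 1) - q ^ D]) :
    Matrix.trace X = τ * q ^ i + τ⁻¹ * q ^ (-(i : ℤ)) ∧ Matrix.det X = 1 := by
  have hq0 : (0:ℝ) < q := lt_trans one_pos hq
  have hq0' : q ≠ 0 := ne_of_gt hq0
  have hq1 : q - 1 ≠ 0 := sub_ne_zero.mpr (ne_of_gt hq)
  have hqD : q ^ D - 1 ≠ 0 := sub_ne_zero.mpr (ne_of_gt (one_lt_pow₀ hq (by omega)))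
  have hqi : q ^ i ≠ 0 := pow_ne_zero _ hq0'
  have hτ2 : τ * τ * q ^ (N + 1) = 1 := by
    rw [hτ, neg_mul_neg, ← Real.rpow_add hq0, ← Real.rpow_natCast q (N + 1),
      ← Real.rpow_add hq0]
    have : (-(N:ℝ) - 1) / 2 + (-(N:ℝ) - 1) / 2 + ((N + 1 : ℕ) : ℝ) = 0 := by
      push_cast; ring
    rw [this, Real.rpow_zero]
  have hτ0 : τ ≠ 0 := by
    rw [hτ]
    exact neg_ne_zero.mpr (ne_of_gt (Real.rpow_pos_of_pos hq0 _))
  have hτinv : τ⁻¹ = τ * q ^ (N + 1) :=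
    inv_eq_of_mul_eq_one_right (by rw [← mul_assoc]; exact hτ2)
  -- rewrite natural subtractions
  have e0 : N - i + 1 = N + 1 - i := by omega
  have s1 : q ^ (N + 1 - i) = q ^ (N + 1) / q ^ i := pow_sub₀ q hq0' (by omega)
  have s2 : q ^ (D - i) = q ^ D / q ^ i := pow_sub₀ q hq0' (by omega)
  have s3 : q ^ (i - 1) = q ^ i / q := by
    rw [pow_sub₀ q hq0' hi1]; ring
  have s4 : q ^ (N - D) = q ^ N / q ^ D := pow_sub₀ q hq0' (by omega)
  have s5 : q ^ (N + D + 1 - i) = q ^ (N + D + 1) / q ^ i := pow_sub₀ q hq0' (by omega)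
  have hqDn : q ^ D ≠ 0 := pow_ne_zero _ hq0'
  constructor
  · rw [hX, Matrix.trace_smul, Matrix.trace_fin_two_of, smul_eq_mul, hτinv,
      _root_.zpow_neg, zpow_natCast, s1, s5]
    field_simp
    ring
  · rw [hX, Matrix.det_smul, Matrix.det_fin_two_of]
    have key : (q ^ (N + 1) - q ^ i + q ^ D - q ^ (N + 1 - i)) *
        (q ^ (N + D + 1 - i) + q ^ (D + i) - q ^ (N + 1) - q ^ D) -
        (q ^ i - 1) * (q ^ (D - i) - 1) * (q ^ (N - i + 1) - 1)
          * (q ^ (i - 1) - q ^ (N - D)) / (q - 1) * (q ^ (D + 1) * (1 - q)) =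
        q ^ (N + 1) * (q ^ D - 1) ^ 2 := by
      rw [e0, s1, s2, s3, s4, s5]
      field_simp
      ring
    rw [key]
    have hcard : Fintype.card (Fin 2) = 2 := by simp
    rw [hcard, div_pow]
    field_simp
    linear_combination hτ2
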